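/- Upper bound for the values: Let u : [t₀,T) → H solve (IMOG) with E_i nonincreasing (guaranteed when γ² > m·L_i). Then f_i(u(t)) ≤ E_i(t₀) + (f_i(u(t₀)) - E_i(t₀))·exp(-(γ/m)(t - t₀)) for all t ∈ [t₀,T). -/

import Mathlib

open scoped RealInnerProductSpace

/-- Upper bound for the values along an (IMOG) trajectory with nonincreasing energy:
`f_i(u(t)) ≤ E_i(t₀) + (f_i(u(t₀)) - E_i(t₀)) exp(-(γ/m)(t - t₀))`. -/
theorem imog_upper_bound_values
    {H : Type*} [NormedAddCommGroup H] [InnerProductSpace ℝ H] [CompleteSpace H]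
    {q : ℕ} (f : Fin q → H → ℝ) (hf : ∀ i, ContDiff ℝ 1 (f i))
    (m γ : ℝ) (hm : 0 < m) (hγ : 0 < γ)
    (t₀ T : ℝ) (hT : t₀ < T)
    (u u' u'' : ℝ → H)
    (hu : ∀ t ∈ Set.Ico t₀ T, HasDerivAt u (u' t) t)
    (hu' : ∀ t ∈ Set.Ico t₀ T, HasDerivAt u' (u'' t) t)
    (hode : ∀ t ∈ Set.Ico t₀ T,
      -(m • u'' t + γ • u' t) ∈ convexHull ℝ (Set.range fun i => gradient (f i) (u t)) ∧
      ∀ y ∈ convexHull ℝ (Set.range fun i => gradient (f i) (u t)),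
        ‖m • u'' t + γ • u' t‖ ≤ ‖y‖)
    (i : Fin q) (E : ℝ → ℝ)
    (hE : ∀ t, E t = f i (u t) + (m / γ) * ⟪gradient (f i) (u t), u' t⟫ + m * ‖u' t‖ ^ 2)
    (hmono : AntitoneOn E (Set.Ico t₀ T)) :
    ∀ t ∈ Set.Ico t₀ T,
      f i (u t) ≤ E t₀ + (f i (u t₀) - E t₀) * Real.exp (-(γ / m) * (t - t₀)) := by
  intro t ht
  set k : ℝ := γ / m with hk
  have hkpos : 0 < k := div_pos hγ hm
  -- g s = f i (u s)
  set g : ℝ → ℝ := fun s => f i (u s) with hg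
  have hgderiv : ∀ s ∈ Set.Ico t₀ T,
      HasDerivAt g (⟪gradient (f i) (u s), u' s⟫) s := by
    intro s hs
    have hdf : HasGradientAt (f i) (gradient (f i) (u s)) (u s) :=
      (((hf i).differentiable one_ne_zero) (u s)).hasGradientAt
    have := hdf.hasFDerivAt.comp_hasDerivAt s (hu s hs)
    have h' : HasDerivAt g _ s := this
    simpa using h'
  -- derivative bound: g' s ≤ k * (E t₀ - g s)
  have hbound : ∀ s ∈ Set.Ico t₀ T,
      ⟪gradient (f i) (u s), u' s⟫ ≤ k * (E t₀ - g s) := by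
    intro s hs
    have hEle : E s ≤ E t₀ := hmono ⟨le_refl t₀, hT⟩ hs hs.1
    have hEeq := hE s
    have hnn : 0 ≤ m * ‖u' s‖ ^ 2 := by positivity
    have h1 : (m / γ) * ⟪gradient (f i) (u s), u' s⟫ ≤ E t₀ - g s := by
      nlinarith [hEle, hEeq]
    have hmγ : 0 < m / γ := div_pos hm hγ
    calc ⟪gradient (f i) (u s), u' s⟫
        = (γ / m) * ((m / γ) * ⟪gradient (f i) (u s), u' s⟫) := by
          field_simp
      _ ≤ (γ / m) * (E t₀ - g s) := by
          apply mul_le_mul_of_nonneg_left h1 (le_of_lt hkpos)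
  -- F s = (g s - E t₀) * exp (k (s - t₀))
  set F : ℝ → ℝ := fun s => (g s - E t₀) * Real.exp (k * (s - t₀)) with hF
  have hFderiv : ∀ s ∈ Set.Ico t₀ T,
      HasDerivAt F ((⟪gradient (f i) (u s), u' s⟫ + k * (g s - E t₀)) *
        Real.exp (k * (s - t₀))) s := by
    intro s hs
    have h1 : HasDerivAt (fun x => g x - E t₀) (⟪gradient (f i) (u s), u' s⟫) s :=
      (hgderiv s hs).sub_const _
    have h2 : HasDerivAt (fun x => Real.exp (k * (x - t₀))) (k * Real.exp (k * (s - t₀))) s := by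
      have : HasDerivAt (fun x => k * (x - t₀)) k s := by
        simpa using ((hasDerivAt_id s).sub_const t₀).const_mul k
      simpa [mul_comm] using this.exp
    have : HasDerivAt (fun x => (g x - E t₀) * Real.exp (k * (x - t₀))) _ s := h1.mul h2
    convert this using 1
    ring
  have hFle : F t ≤ F t₀ := by
    rcases eq_or_lt_of_le ht.1 with h | h
    · rw [h]
    · have hsub : Set.Icc t₀ t ⊆ Set.Ico t₀ T := fun s hs => ⟨hs.1, lt_of_le_of_lt hs.2 ht.2⟩
      have hcont : ContinuousOn F (Set.Icc t₀ t) := fun s hs =>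
        ((hFderiv s (hsub hs)).continuousAt).continuousWithinAt
      have hderiv : ∀ s ∈ interior (Set.Icc t₀ t), deriv F s ≤ 0 := by
        intro s hs
        rw [interior_Icc] at hs
        have hs' : s ∈ Set.Ico t₀ T := hsub ⟨le_of_lt hs.1, le_of_lt hs.2⟩
        rw [(hFderiv s hs').deriv]
        have := hbound s hs'
        have hexp : (0:ℝ) < Real.exp (k * (s - t₀)) := Real.exp_pos _
        nlinarith
      have := antitoneOn_of_deriv_nonpos (convex_Icc t₀ t) hcont
        (fun s hs => (hFderiv s (hsub (interior_subset hs))).differentiableAt.differentiableWithinAt)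
        hderiv
      exact this ⟨le_refl t₀, le_of_lt h⟩ ⟨le_of_lt h, le_refl t⟩ (le_of_lt h)
  -- unfold F
  have hFt₀ : F t₀ = g t₀ - E t₀ := by simp [hF]
  rw [hFt₀] at hFle
  have hexp : (0:ℝ) < Real.exp (k * (t - t₀)) := Real.exp_pos _
  have key : g t - E t₀ ≤ (g t₀ - E t₀) * Real.exp (-k * (t - t₀)) := by
    have : (g t - E t₀) * Real.exp (k * (t - t₀)) ≤ g t₀ - E t₀ := hFle
    rw [neg_mul, Real.exp_neg, ← div_eq_mul_inv]
    exact (le_div_iff₀ hexp).mpr this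
  linarith [key]
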